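/- The Cauchy density p(x,γ) = (1/(πγ))·1/((x/γ)² + 1), γ > 0, has infinite second moment: ∫_ℝ x² p(x,γ) dx = +∞; consequently, for γ₁ ≠ γ₂ the Wasserstein-2 distance between p(·,γ₁) and p(·,γ₂) is infinite, while D_{T,α}(p(·,γ₁)‖p(·,γ₂)) = (1/α²)((γ₁/γ₂)^α − α log(γ₁/γ₂) − 1) is finite. -/

import Mathlib

open Real MeasureTheory

/-- The Cauchy density with scale parameter `γ`. -/
noncomputable def cauchyDensity (γ x : ℝ) : ℝ := (1 / (Real.pi * γ)) * (1 / ((x / γ) ^ 2 + 1))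

/-- The quantile function of the standard Cauchy distribution. -/
noncomputable def cauchyQuantile (u : ℝ) : ℝ := Real.tan (Real.pi * (u - 1 / 2))

/-- The transport alpha function `f_{T,α}` for `α ≠ 0`. -/
noncomputable def fT (α z : ℝ) : ℝ := (1 / α ^ 2) * (z ^ α - α * Real.log z - 1)

lemma lint_inv_sq_top : ∫⁻ t in Set.Ioo (0:ℝ) (1/4), ENNReal.ofReal (t⁻¹ ^ 2) = ⊤ := by
  by_contra h
  have hmeas : AEStronglyMeasurable (fun t : ℝ => t⁻¹ ^ 2)
      (volume.restrict (Set.Ioo (0:ℝ) (1/4))) :=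
    ((measurable_inv.pow_const 2)).aestronglyMeasurable
  have hnn : 0 ≤ᵐ[volume.restrict (Set.Ioo (0:ℝ) (1/4))] fun t : ℝ => t⁻¹ ^ 2 :=
    Filter.Eventually.of_forall fun t => sq_nonneg _
  have hint : IntegrableOn (fun t : ℝ => t⁻¹ ^ 2) (Set.Ioo (0:ℝ) (1/4)) :=
    (lintegral_ofReal_ne_top_iff_integrable hmeas hnn).mp h
  have hint2 : IntegrableOn (fun t : ℝ => t ^ (-2:ℝ)) (Set.Ioo (0:ℝ) (1/4)) := by
    refine hint.congr_fun (fun t ht => ?_) measurableSet_Ioo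
    rw [show (-2:ℝ) = -(2:ℕ) by norm_num, Real.rpow_neg ht.1.le, Real.rpow_natCast, ← inv_pow]
  rw [intervalIntegral.integrableOn_Ioo_rpow_iff (by norm_num : (0:ℝ) < 1/4)] at hint2
  norm_num at hint2

lemma lint_one_sub_inv_sq_top :
    ∫⁻ u in Set.Ioo (3/4:ℝ) 1, ENNReal.ofReal ((1-u)⁻¹ ^ 2) = ⊤ := by
  have hmp : MeasurePreserving (fun u : ℝ => 1 - u) volume volume :=
    Measure.measurePreserving_sub_left volume 1
  have hemb : MeasurableEmbedding (fun u : ℝ => 1 - u) :=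
    MeasurableEquiv.measurableEmbedding
      ⟨⟨fun x => 1 - x, fun x => 1 - x, fun x => by ring, fun x => by ring⟩,
        measurable_const.sub measurable_id, measurable_const.sub measurable_id⟩
  have hpre : (fun u : ℝ => 1 - u) ⁻¹' (Set.Ioo (0:ℝ) (1/4)) = Set.Ioo (3/4:ℝ) 1 := by
    ext u
    simp only [Set.mem_preimage, Set.mem_Ioo]
    constructor <;> intro h <;> exact ⟨by linarith [h.1, h.2], by linarith [h.1, h.2]⟩
  have := hmp.setLIntegral_comp_preimage_emb hemb
    (fun t => ENNReal.ofReal (t⁻¹ ^ 2)) (Set.Ioo (0:ℝ) (1/4))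
  rw [hpre] at this
  rw [this, lint_inv_sq_top]

set_option maxHeartbeats 1000000

theorem cauchy_transport_alpha (γ γ₁ γ₂ α : ℝ) (hγ : 0 < γ)
    (h₁ : 0 < γ₁) (h₂ : 0 < γ₂) (hne : γ₁ ≠ γ₂) (hα : α ≠ 0) :
    (∫⁻ x, ENNReal.ofReal (x ^ 2 * cauchyDensity γ x) = ⊤) ∧
    (∫⁻ u in Set.Ioo (0 : ℝ) 1,
        ENNReal.ofReal ((γ₁ * cauchyQuantile u - γ₂ * cauchyQuantile u) ^ 2) = ⊤) ∧
    (∫ u in Set.Ioo (0 : ℝ) 1,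
        fT α (deriv (fun v => γ₁ * cauchyQuantile v) u /
              deriv (fun v => γ₂ * cauchyQuantile v) u))
      = (1 / α ^ 2) * ((γ₁ / γ₂) ^ α - α * Real.log (γ₁ / γ₂) - 1) := by
  have hπ : (0:ℝ) < Real.pi := Real.pi_pos
  refine ⟨?_, ?_, ?_⟩
  · -- infinite second moment
    have c1 : (0:ℝ) < γ / (2 * Real.pi) := by positivity
    have hbound : ∀ x ∈ Set.Ici γ, γ / (2 * Real.pi) ≤ x ^ 2 * cauchyDensity γ x := by
      intro x hx
      have hxγ : γ ≤ x := hx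
      have hx0 : 0 < x := lt_of_lt_of_le hγ hxγ
      unfold cauchyDensity
      have h1 : (0:ℝ) < (x / γ) ^ 2 + 1 := by positivity
      rw [div_le_iff₀ (by positivity)]
      have key : γ ^ 2 ≤ x ^ 2 := by nlinarith
      have expand : x ^ 2 * (1 / (Real.pi * γ) * (1 / ((x / γ) ^ 2 + 1))) * (2 * Real.pi)
          = 2 * x ^ 2 * γ / (x ^ 2 + γ ^ 2) := by
        field_simp
      rw [expand, le_div_iff₀ (by positivity)]
      nlinarith
    have hcont : Continuous fun x : ℝ => x ^ 2 * cauchyDensity γ x := by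
      unfold cauchyDensity
      refine (continuous_pow 2).mul (continuous_const.mul (Continuous.div continuous_const ?_ ?_))
      · continuity
      · intro x; positivity
    rw [eq_top_iff]
    calc (⊤ : ENNReal) = ENNReal.ofReal (γ / (2 * Real.pi)) * volume (Set.Ici γ) := by
          rw [Real.volume_Ici, ENNReal.mul_top (ne_of_gt (ENNReal.ofReal_pos.mpr c1))]
      _ = ∫⁻ _ in Set.Ici γ, ENNReal.ofReal (γ / (2 * Real.pi)) :=
          (setLIntegral_const _ _).symm
      _ ≤ ∫⁻ x in Set.Ici γ, ENNReal.ofReal (x ^ 2 * cauchyDensity γ x) :=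
          setLIntegral_mono (ENNReal.measurable_ofReal.comp hcont.measurable)
            (fun x hx => ENNReal.ofReal_le_ofReal (hbound x hx))
      _ ≤ ∫⁻ x, ENNReal.ofReal (x ^ 2 * cauchyDensity γ x) := setLIntegral_le_lintegral _ _
  · -- infinite W2
    set k : ℝ := (γ₁ - γ₂) ^ 2 / (4 * Real.pi ^ 2) with hk_def
    have hk : 0 < k := by
      have : γ₁ - γ₂ ≠ 0 := sub_ne_zero.mpr hne
      positivity
    have hmeas : Measurable fun u : ℝ => ENNReal.ofReal ((1 - u)⁻¹ ^ 2) :=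
      ENNReal.measurable_ofReal.comp (((measurable_const.sub measurable_id).inv).pow_const 2)
    have key : ∫⁻ u in Set.Ioo (3/4:ℝ) 1, ENNReal.ofReal (k * (1 - u)⁻¹ ^ 2) = ⊤ := by
      have heq : ∀ u : ℝ, ENNReal.ofReal (k * (1 - u)⁻¹ ^ 2)
          = ENNReal.ofReal k * ENNReal.ofReal ((1 - u)⁻¹ ^ 2) :=
        fun u => ENNReal.ofReal_mul hk.le
      simp_rw [heq]
      rw [lintegral_const_mul _ hmeas, lint_one_sub_inv_sq_top,
        ENNReal.mul_top (ne_of_gt (ENNReal.ofReal_pos.mpr hk))]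
    have hbound : ∀ u ∈ Set.Ioo (3/4:ℝ) 1,
        k * (1 - u)⁻¹ ^ 2 ≤ (γ₁ * cauchyQuantile u - γ₂ * cauchyQuantile u) ^ 2 := by
      intro u hu
      obtain ⟨hu1, hu2⟩ := hu
      set t : ℝ := Real.pi * (u - 1/2) with ht_def
      have ht1 : Real.pi / 4 < t := by rw [ht_def]; nlinarith
      have ht2 : t < Real.pi / 2 := by rw [ht_def]; nlinarith
      have hcos_pos : 0 < Real.cos t := by
        apply Real.cos_pos_of_mem_Ioo
        constructor <;> nlinarith
      have hsin : (1:ℝ)/2 ≤ Real.sin t := by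
        have h4 : Real.sin (Real.pi / 4) < Real.sin t :=
          Real.sin_lt_sin_of_lt_of_le_pi_div_two (by nlinarith) ht2.le ht1
        rw [Real.sin_pi_div_four] at h4
        nlinarith [Real.sq_sqrt (by norm_num : (2:ℝ) ≥ 0), Real.sqrt_nonneg 2,
          Real.one_le_sqrt.mpr (by norm_num : (1:ℝ) ≤ 2)]
      have hcos_le : Real.cos t ≤ Real.pi / 2 - t := by
        rw [← Real.sin_pi_div_two_sub]
        exact Real.sin_le (by linarith)
      have h1u : 0 < 1 - u := by linarith
      have hpi2t : Real.pi / 2 - t = Real.pi * (1 - u) := by rw [ht_def]; ring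
      have htan : 1 / (2 * Real.pi * (1 - u)) ≤ Real.tan t := by
        rw [Real.tan_eq_sin_div_cos]
        rw [div_le_div_iff₀ (by positivity) hcos_pos]
        calc 1 * Real.cos t ≤ Real.pi * (1 - u) := by
              rw [one_mul]; rw [hpi2t] at hcos_le; exact hcos_le
          _ ≤ Real.sin t * (2 * Real.pi * (1 - u)) := by nlinarith
      have hpos : 0 < 1 / (2 * Real.pi * (1 - u)) := by positivity
      have hsq : (1 / (2 * Real.pi * (1 - u))) ^ 2 ≤ Real.tan t ^ 2 := by
        apply pow_le_pow_left₀ hpos.le htan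
      have hrw : (γ₁ * cauchyQuantile u - γ₂ * cauchyQuantile u) ^ 2
          = (γ₁ - γ₂) ^ 2 * Real.tan t ^ 2 := by
        unfold cauchyQuantile; rw [← ht_def]; ring
      have hk_rw : k * (1 - u)⁻¹ ^ 2 = (γ₁ - γ₂) ^ 2 * (1 / (2 * Real.pi * (1 - u))) ^ 2 := by
        rw [hk_def]; field_simp
        norm_num
      rw [hrw, hk_rw]
      have : (0:ℝ) ≤ (γ₁ - γ₂) ^ 2 := sq_nonneg _
      nlinarith
    have hmeas2 : Measurable fun u : ℝ =>
        ENNReal.ofReal ((γ₁ * cauchyQuantile u - γ₂ * cauchyQuantile u) ^ 2) := by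
      apply ENNReal.measurable_ofReal.comp
      have htan0 : Measurable Real.tan := by
        have he : Real.tan = fun x => Real.sin x / Real.cos x :=
          funext fun x => Real.tan_eq_sin_div_cos x
        rw [he]; exact Real.measurable_sin.div Real.measurable_cos
      have htan : Measurable fun u : ℝ => Real.tan (Real.pi * (u - 1/2)) :=
        htan0.comp ((measurable_id.sub measurable_const).const_mul Real.pi)
      unfold cauchyQuantile
      exact ((htan.const_mul γ₁).sub (htan.const_mul γ₂)).pow_const 2
    rw [eq_top_iff]
    calc (⊤ : ENNReal) = ∫⁻ u in Set.Ioo (3/4:ℝ) 1, ENNReal.ofReal (k * (1 - u)⁻¹ ^ 2) :=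
          key.symm
      _ ≤ ∫⁻ u in Set.Ioo (3/4:ℝ) 1,
            ENNReal.ofReal ((γ₁ * cauchyQuantile u - γ₂ * cauchyQuantile u) ^ 2) :=
          setLIntegral_mono hmeas2 (fun u hu => ENNReal.ofReal_le_ofReal (hbound u hu))
      _ ≤ ∫⁻ u in Set.Ioo (0:ℝ) 1,
            ENNReal.ofReal ((γ₁ * cauchyQuantile u - γ₂ * cauchyQuantile u) ^ 2) :=
          lintegral_mono_set (Set.Ioo_subset_Ioo (by norm_num) le_rfl)
  · -- finite transport divergence
    have hd : Set.EqOn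
        (fun u => fT α (deriv (fun v => γ₁ * cauchyQuantile v) u /
              deriv (fun v => γ₂ * cauchyQuantile v) u))
        (fun _ => fT α (γ₁ / γ₂)) (Set.Ioo (0:ℝ) 1) := by
      intro u hu
      obtain ⟨hu1, hu2⟩ := hu
      have hcos : Real.cos (Real.pi * (u - 1/2)) ≠ 0 := by
        apply ne_of_gt
        apply Real.cos_pos_of_mem_Ioo
        constructor <;> nlinarith
      have h1 : HasDerivAt (fun v : ℝ => Real.pi * (v - 1/2)) Real.pi u := by
        exact (((hasDerivAt_id u).sub_const (1/2)).const_mul Real.pi).congr_deriv (mul_one _)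
      have hD : HasDerivAt (fun v : ℝ => Real.tan (Real.pi * (v - 1/2)))
          (1 / Real.cos (Real.pi * (u - 1/2)) ^ 2 * Real.pi) u := by
        have h := (Real.hasDerivAt_tan hcos).comp u h1
        exact h
      set D : ℝ := 1 / Real.cos (Real.pi * (u - 1/2)) ^ 2 * Real.pi with hD_def
      have hDne : D ≠ 0 := by
        rw [hD_def]
        have : Real.cos (Real.pi * (u - 1/2)) ^ 2 ≠ 0 := pow_ne_zero 2 hcos
        positivity
      have hD1 : deriv (fun v => γ₁ * cauchyQuantile v) u = γ₁ * D := by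
        unfold cauchyQuantile
        exact (hD.const_mul γ₁).deriv
      have hD2 : deriv (fun v => γ₂ * cauchyQuantile v) u = γ₂ * D := by
        unfold cauchyQuantile
        exact (hD.const_mul γ₂).deriv
      simp only [hD1, hD2]
      congr 1
      field_simp
    rw [setIntegral_congr_fun measurableSet_Ioo hd, setIntegral_const]
    simp [Real.volume_Ioo, fT]
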